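/- Let f(θ,S) be a measurable function and let P_S be a data-dependent probability distribution over parameters Θ depending on the dataset S ∼ D^s. If the β-approximate max-information of the map S ↦ P_S is at most k, then ξ(f, P_S) := ∫∫ exp(f(θ,S)) P_S(dθ) D^s(dS) ≤ e^k · ξ_bd(f) + β · exp(‖f‖∞), where ξ_bd(f) := sup over data-independent distributions P' of ∫∫ exp(f(θ,S)) P'(dθ) D^s(dS). -/

import Mathlib

open MeasureTheory ENNReal ProbabilityTheory

/-- Bound on the exponential moment `ξ(f, P_S)` for a data-dependent prior `P_S` (given by a
Markov kernel `P` from datasets to parameters) whose `β`-approximate max-information is at most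
`k`:  `ξ(f, P_S) ≤ e^k · ξ_bd(f) + β · exp ‖f‖∞`, where `ξ_bd(f)` is the supremum of the
exponential moment over data-independent priors `P'`. -/
theorem xi_bound_of_max_information
    {Ω Θ : Type*} [MeasurableSpace Ω] [MeasurableSpace Θ]
    (D : Measure Ω) [IsProbabilityMeasure D]
    (P : Kernel Ω Θ) [IsMarkovKernel P]
    (k : ℝ) (b : ℝ≥0∞) (hb0 : 0 < b) (hb1 : b < 1)
    (hmax : ∀ E : Set (Ω × Θ), MeasurableSet E →
      (D.compProd P) E ≤
        ENNReal.ofReal (Real.exp k) * (D.prod (D.bind (fun ω => P ω))) E + b)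
    (f : Ω → Θ → ℝ) (hf : Measurable (Function.uncurry f))
    (M : ℝ) (hM : ∀ ω θ, |f ω θ| ≤ M) :
    ∫⁻ z, ENNReal.ofReal (Real.exp (f z.1 z.2)) ∂(D.compProd P) ≤
      ENNReal.ofReal (Real.exp k) *
        (⨆ P' : {m : Measure Θ // IsProbabilityMeasure m},
          ∫⁻ ω, ∫⁻ θ, ENNReal.ofReal (Real.exp (f ω θ)) ∂P'.1 ∂D) +
      b * ENNReal.ofReal (Real.exp M) := by
  classical
  set Q : Measure Θ := D.bind (fun ω => P ω) with hQdef
  have hPmeas : Measurable (fun ω => P ω) := P.measurable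
  have hQprob : IsProbabilityMeasure Q := by
    constructor
    rw [hQdef, Measure.bind_apply MeasurableSet.univ hPmeas.aemeasurable]

    simp
  set μ : Measure (Ω × Θ) := D.compProd P with hμdef
  set ν : Measure (Ω × Θ) := D.prod Q with hνdef
  set g : Ω × Θ → ℝ := fun z => Real.exp (f z.1 z.2) with hgdef
  have hfm : Measurable fun z : Ω × Θ => f z.1 z.2 := hf
  have hgm : Measurable g := Real.measurable_exp.comp hfm
  set C : ℝ := Real.exp M with hCdef
  have hC0 : 0 < C := Real.exp_pos M
  have hgC : ∀ z, g z ≤ C := fun z =>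
    Real.exp_le_exp.mpr ((abs_le.mp (hM z.1 z.2)).2)
  have hEmeas : ∀ t : ℝ, MeasurableSet {z : Ω × Θ | t < g z} := fun t =>
    hgm measurableSet_Ioi
  -- layer cake for both measures
  have layerμ : ∫⁻ z, ENNReal.ofReal (g z) ∂μ
      = ∫⁻ t in Set.Ioi (0:ℝ), μ {z | t < g z} :=
    lintegral_eq_lintegral_meas_lt μ
      (Filter.Eventually.of_forall fun z => (Real.exp_pos _).le) hgm.aemeasurable
  have layerν : ∫⁻ z, ENNReal.ofReal (g z) ∂ν
      = ∫⁻ t in Set.Ioi (0:ℝ), ν {z | t < g z} :=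
    lintegral_eq_lintegral_meas_lt ν
      (Filter.Eventually.of_forall fun z => (Real.exp_pos _).le) hgm.aemeasurable
  -- the sets are empty for t ≥ C
  have hvanish : ∀ t : ℝ, C ≤ t → {z : Ω × Θ | t < g z} = ∅ := by
    intro t ht
    ext z
    simp only [Set.mem_setOf_eq, Set.mem_empty_iff_false, iff_false, not_lt]
    exact (hgC z).trans ht
  -- restrict the μ-side integral to Ioc 0 C
  have hsplit : ∫⁻ t in Set.Ioi (0:ℝ), μ {z | t < g z}
      = ∫⁻ t in Set.Ioc (0:ℝ) C, μ {z | t < g z} := by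
    rw [← Set.Ioc_union_Ioi_eq_Ioi hC0.le,
      lintegral_union measurableSet_Ioi Set.Ioc_disjoint_Ioi_same]
    have : ∫⁻ t in Set.Ioi C, μ {z | t < g z} = 0 := by
      rw [setLIntegral_eq_zero_iff measurableSet_Ioi]
      · filter_upwards with t ht
        simp only [Set.mem_Ioi] at ht
        rw [hvanish t ht.le, measure_empty]
      · have hanti : Antitone fun t : ℝ => μ {z | t < g z} := fun s t hst =>
          measure_mono fun z hz => lt_of_le_of_lt hst hz
        exact hanti.measurable
    rw [this, add_zero]
  -- pointwise bound from max-information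
  have hpt : ∀ t : ℝ, μ {z | t < g z}
      ≤ ENNReal.ofReal (Real.exp k) * ν {z | t < g z} + b := fun t =>
    hmax _ (hEmeas t)
  have hanti_ν : Antitone fun t : ℝ => ν {z | t < g z} := fun s t hst =>
    measure_mono fun z hz => lt_of_le_of_lt hst hz
  have hmono_ν : Measurable fun t : ℝ => ν {z | t < g z} := hanti_ν.measurable
  calc ∫⁻ z, ENNReal.ofReal (Real.exp (f z.1 z.2)) ∂μ
      = ∫⁻ t in Set.Ioc (0:ℝ) C, μ {z | t < g z} := by
        rw [← hsplit, ← layerμ]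
    _ ≤ ∫⁻ t in Set.Ioc (0:ℝ) C,
          (ENNReal.ofReal (Real.exp k) * ν {z | t < g z} + b) :=
        lintegral_mono fun t => hpt t
    _ = ENNReal.ofReal (Real.exp k) * (∫⁻ t in Set.Ioc (0:ℝ) C, ν {z | t < g z})
          + b * ENNReal.ofReal C := by
        rw [lintegral_add_right _ measurable_const,
          lintegral_const_mul _ hmono_ν, setLIntegral_const,
          Real.volume_Ioc, sub_zero]
    _ ≤ ENNReal.ofReal (Real.exp k) * (∫⁻ t in Set.Ioi (0:ℝ), ν {z | t < g z})
          + b * ENNReal.ofReal C := by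
        gcongr
        exact Set.Ioc_subset_Ioi_self
    _ = ENNReal.ofReal (Real.exp k) * (∫⁻ z, ENNReal.ofReal (g z) ∂ν)
          + b * ENNReal.ofReal C := by rw [layerν]
    _ ≤ ENNReal.ofReal (Real.exp k) *
          (⨆ P' : {m : Measure Θ // IsProbabilityMeasure m},
            ∫⁻ ω, ∫⁻ θ, ENNReal.ofReal (Real.exp (f ω θ)) ∂P'.1 ∂D) +
        b * ENNReal.ofReal (Real.exp M) := by
        gcongr
        have hνint : ∫⁻ z, ENNReal.ofReal (g z) ∂ν
            = ∫⁻ ω, ∫⁻ θ, ENNReal.ofReal (Real.exp (f ω θ)) ∂Q ∂D := by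
          rw [hνdef, lintegral_prod _ (hgm.ennreal_ofReal.aemeasurable)]
        rw [hνint]
        exact le_iSup (fun P' : {m : Measure Θ // IsProbabilityMeasure m} =>
          ∫⁻ ω, ∫⁻ θ, ENNReal.ofReal (Real.exp (f ω θ)) ∂P'.1 ∂D) ⟨Q, hQprob⟩
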